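/- Let λ, μ, ω be real constants with μ > 0, λ + 2μ > 0, ω > 0, and set k_p := ω/√(λ+2μ), k_s := ω/√μ. For y, z ∈ ℝ³ with y ≠ z, define the 3×3 Green tensors G_p(y,z) with entries (G_p)_{ij} = −(1/(μk_s²)) ∂_{y_i}∂_{y_j} Φ_{k_p}(y,z) and G_s(y,z) with entries (G_s)_{ij} = (1/μ)(Φ_{k_s}(y,z)δ_{ij} + (1/k_s²) ∂_{y_i}∂_{y_j} Φ_{k_s}(y,z)), where Φ_k(y,z) := e^{ik|y−z|}/(4π|y−z|). Then the imaginary parts of their traces are given by Im{tr(G_p(y,z))} = (1/(λ+2μ)) · sin(k_p|y−z|)/(4π|y−z|) and Im{tr(G_s(y,z))} = (2/μ) · sin(k_s|y−z|)/(4π|y−z|). -/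

import Mathlib

/-- Partial derivative ∂_i of a complex-valued function on ℝ³. -/
noncomputable def pd (i : Fin 3) (f : EuclideanSpace ℝ (Fin 3) → ℂ) :
    EuclideanSpace ℝ (Fin 3) → ℂ :=
  fun x => fderiv ℝ f x (EuclideanSpace.single i 1)

/-- Second partial derivative ∂_i ∂_j. -/
noncomputable def pd2 (i j : Fin 3) (f : EuclideanSpace ℝ (Fin 3) → ℂ) :
    EuclideanSpace ℝ (Fin 3) → ℂ :=
  pd i (pd j f)

/-- Fundamental solution of the 3D Helmholtz equation with wave number `k` and source `z`. -/
noncomputable def Phi (k : ℝ) (z x : EuclideanSpace ℝ (Fin 3)) : ℂ :=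
  Complex.exp (Complex.I * (k : ℂ) * (‖x - z‖ : ℝ)) / ((4 * Real.pi * ‖x - z‖ : ℝ) : ℂ)

/-! ### Auxiliary one-dimensional radial functions -/

/-- The radial exponential `e^{ikt}`. -/
noncomputable def ge (k t : ℝ) : ℂ := Complex.exp (Complex.I * (k:ℂ) * (t:ℝ))
/-- The radial profile of `Φ_k`. -/
noncomputable def gg (k t : ℝ) : ℂ := ge k t / ((4 * Real.pi * t : ℝ) : ℂ)
/-- The derivative of `gg`. -/
noncomputable def gg' (k t : ℝ) : ℂ :=
  (Complex.I * k * t - 1) * ge k t / ((4 * Real.pi * t^2 : ℝ) : ℂ)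
/-- `gg' k t / t`. -/
noncomputable def HH (k t : ℝ) : ℂ :=
  (Complex.I * k * t - 1) * ge k t / ((4 * Real.pi * t^3 : ℝ) : ℂ)
/-- The derivative of `HH`. -/
noncomputable def HH' (k t : ℝ) : ℂ :=
  (-(k^2 : ℂ) * t^2 - 3 * Complex.I * k * t + 3) * ge k t / ((4 * Real.pi * t^4 : ℝ) : ℂ)

theorem hasDerivAt_ge (k t : ℝ) : HasDerivAt (ge k) (Complex.I * k * ge k t) t := by
  have h1 : HasDerivAt (fun t : ℝ => ((t : ℝ) : ℂ)) 1 t := by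
    simpa using (hasDerivAt_id t).ofReal_comp
  have h2 := (h1.const_mul (Complex.I * (k:ℂ))).cexp
  simp only [mul_one] at h2
  unfold ge
  convert h2 using 1
  ring

theorem hasDerivAt_gg (k t : ℝ) (ht : t ≠ 0) : HasDerivAt (gg k) (gg' k t) t := by
  have hπ : (Real.pi : ℂ) ≠ 0 := by exact_mod_cast Real.pi_ne_zero
  have ht' : (t : ℂ) ≠ 0 := by exact_mod_cast ht
  have hden : HasDerivAt (fun t : ℝ => ((4 * Real.pi * t : ℝ) : ℂ)) ((4 * Real.pi : ℝ) : ℂ) t := by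
    have : HasDerivAt (fun t : ℝ => (4 * Real.pi * t : ℝ)) (4 * Real.pi) t := by
      simpa using (hasDerivAt_id t).const_mul (4 * Real.pi)
    exact this.ofReal_comp
  have hne : ((4 * Real.pi * t : ℝ) : ℂ) ≠ 0 := by
    simp [Real.pi_ne_zero, ht]
  have h := (hasDerivAt_ge k t).div hden hne
  convert h using 1
  · rfl
  · rfl
  rw [gg', ge]
  push_cast
  field_simp

theorem hasDerivAt_HH (k t : ℝ) (ht : t ≠ 0) : HasDerivAt (HH k) (HH' k t) t := by
  have hπ : (Real.pi : ℂ) ≠ 0 := by exact_mod_cast Real.pi_ne_zero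
  have ht' : (t : ℂ) ≠ 0 := by exact_mod_cast ht
  have hnum : HasDerivAt (fun t : ℝ => (Complex.I * k * t - 1) * ge k t)
      (Complex.I * k * ge k t + (Complex.I * k * t - 1) * (Complex.I * k * ge k t)) t := by
    have h1 : HasDerivAt (fun t : ℝ => ((t : ℝ) : ℂ)) 1 t := by
      simpa using (hasDerivAt_id t).ofReal_comp
    have h2 : HasDerivAt (fun t : ℝ => Complex.I * k * t - 1) (Complex.I * k) t := by
      simpa using (h1.const_mul (Complex.I * (k:ℂ))).sub_const 1
    exact h2.mul (hasDerivAt_ge k t)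
  have hden : HasDerivAt (fun t : ℝ => ((4 * Real.pi * t^3 : ℝ) : ℂ))
      ((12 * Real.pi * t^2 : ℝ) : ℂ) t := by
    have h3 : HasDerivAt (fun t : ℝ => (4 * Real.pi * t^3 : ℝ)) (12 * Real.pi * t^2) t := by
      have := (hasDerivAt_pow 3 t).const_mul (4 * Real.pi)
      convert this using 1
      · rfl
      · rfl
      push_cast; ring
    exact h3.ofReal_comp
  have hne : ((4 * Real.pi * t^3 : ℝ) : ℂ) ≠ 0 := by
    simp [Real.pi_ne_zero, ht]
  have h := hnum.div hden hne
  convert h using 1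
  · rfl
  · rfl
  rw [HH', ge]
  push_cast
  rw [div_eq_div_iff (by simp [hπ, ht']) (by simp [hπ, ht'])]
  ring_nf
  simp only [Complex.I_sq]
  ring

/-! ### Spatial derivatives -/

theorem norm_fderiv (z x : EuclideanSpace ℝ (Fin 3)) (h : x ≠ z) :
    HasFDerivAt (fun x : EuclideanSpace ℝ (Fin 3) => ‖x - z‖)
      (‖x - z‖⁻¹ • innerSL ℝ (x - z)) x := by
  have hne : ‖x - z‖ ≠ 0 := by simp [sub_eq_zero, h]
  have h2 : HasFDerivAt (fun x : EuclideanSpace ℝ (Fin 3) => ‖x - z‖ ^ 2)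
      (2 • innerSL ℝ (x - z)) x := by
    simpa using ((hasFDerivAt_id x).sub_const z).norm_sq
  have h3 := h2.sqrt (by positivity)
  have heq : (fun x : EuclideanSpace ℝ (Fin 3) => Real.sqrt (‖x - z‖ ^ 2))
      = fun x : EuclideanSpace ℝ (Fin 3) => ‖x - z‖ := by
    funext w; rw [Real.sqrt_sq (norm_nonneg _)]
  rw [heq, Real.sqrt_sq (norm_nonneg _)] at h3
  have : (1 / (2 * ‖x - z‖)) • (2 • innerSL ℝ (x - z)) = ‖x - z‖⁻¹ • innerSL ℝ (x - z) := by
    ext v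
    simp only [ContinuousLinearMap.coe_smul', Pi.smul_apply, smul_eq_mul]
    field_simp
    ring
  rwa [this] at h3

theorem phi_eq (k : ℝ) (z x : EuclideanSpace ℝ (Fin 3)) : Phi k z x = gg k ‖x - z‖ := rfl

theorem norm_ne (z x : EuclideanSpace ℝ (Fin 3)) (h : x ≠ z) : ‖x - z‖ ≠ 0 := by
  simp [sub_eq_zero, h]

theorem pd_phi (k : ℝ) (z x : EuclideanSpace ℝ (Fin 3)) (h : x ≠ z) (i : Fin 3) :
    pd i (fun y' => Phi k z y') x = ((x i - z i : ℝ) : ℂ) * HH k ‖x - z‖ := by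
  have hr := norm_ne z x h
  have hΦ : HasFDerivAt (fun y' => Phi k z y')
      ((ContinuousLinearMap.smulRight (1 : ℝ →L[ℝ] ℝ) (gg' k ‖x - z‖)).comp
        (‖x - z‖⁻¹ • innerSL ℝ (x - z))) x := by
    have := ((hasDerivAt_gg k ‖x - z‖ hr).hasFDerivAt).comp x (norm_fderiv z x h)
    exact this
  rw [pd, hΦ.fderiv]
  simp only [ContinuousLinearMap.coe_comp', Function.comp_apply,
    ContinuousLinearMap.coe_smul', Pi.smul_apply, innerSL_apply_apply,
    ContinuousLinearMap.smulRight_apply, ContinuousLinearMap.one_apply]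
  rw [EuclideanSpace.inner_single_right]
  have hxz : (x - z) i = x i - z i := by
    simp [PiLp.sub_apply]
  rw [hxz]
  have hπ : (Real.pi : ℂ) ≠ 0 := by exact_mod_cast Real.pi_ne_zero
  have hr' : ((‖x - z‖ : ℝ) : ℂ) ≠ 0 := by exact_mod_cast hr
  rw [smul_eq_mul, Complex.real_smul, gg', HH]
  push_cast
  field_simp
  simp only [starRingEnd_apply, star_trivial]; push_cast; ring

theorem pd2_phi_diag (k : ℝ) (z y : EuclideanSpace ℝ (Fin 3)) (h : y ≠ z) (i : Fin 3) :
    pd i (pd i (fun y' => Phi k z y')) y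
      = ((y i - z i : ℝ) : ℂ) * ((((y i - z i) / ‖y - z‖ : ℝ)) : ℂ) * HH' k ‖y - z‖
        + HH k ‖y - z‖ := by
  have hr := norm_ne z y h
  have heq : pd i (fun y' => Phi k z y') =ᶠ[nhds y]
      fun x => ((x i - z i : ℝ) : ℂ) * HH k ‖x - z‖ := by
    filter_upwards [(isOpen_ne : IsOpen {x : EuclideanSpace ℝ (Fin 3) | x ≠ z}).mem_nhds h]
      with x hx using pd_phi k z x hx i
  have h1 : HasFDerivAt (fun x : EuclideanSpace ℝ (Fin 3) => x i - z i)
      (EuclideanSpace.proj i : EuclideanSpace ℝ (Fin 3) →L[ℝ] ℝ) y := by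
    simpa using ((EuclideanSpace.proj i : EuclideanSpace ℝ (Fin 3) →L[ℝ] ℝ).hasFDerivAt
      (x := y)).sub_const (z i)
  have hc : HasFDerivAt (fun x : EuclideanSpace ℝ (Fin 3) => ((x i - z i : ℝ) : ℂ))
      (Complex.ofRealCLM.comp (EuclideanSpace.proj i : EuclideanSpace ℝ (Fin 3) →L[ℝ] ℝ)) y :=
    Complex.ofRealCLM.hasFDerivAt.comp y h1
  have hH : HasFDerivAt (fun x : EuclideanSpace ℝ (Fin 3) => HH k ‖x - z‖)
      ((ContinuousLinearMap.smulRight (1 : ℝ →L[ℝ] ℝ) (HH' k ‖y - z‖)).comp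
        (‖y - z‖⁻¹ • innerSL ℝ (y - z))) y :=
    by
      have := ((hasDerivAt_HH k ‖y - z‖ hr).hasFDerivAt).comp y (norm_fderiv z y h)
      exact this
  have hΨ : HasFDerivAt (fun x : EuclideanSpace ℝ (Fin 3) => ((x i - z i : ℝ) : ℂ) * HH k ‖x - z‖) _ y :=
    hc.mul hH
  rw [pd, heq.fderiv_eq, hΨ.fderiv]
  simp only [ContinuousLinearMap.add_apply, ContinuousLinearMap.coe_smul', Pi.smul_apply,
    ContinuousLinearMap.coe_comp', Function.comp_apply, innerSL_apply_apply,
    ContinuousLinearMap.smulRight_apply, ContinuousLinearMap.one_apply,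
    Complex.ofRealCLM_apply]
  rw [EuclideanSpace.inner_single_right]
  have hxz : (y - z) i = y i - z i := by simp [PiLp.sub_apply]
  have hproj : (EuclideanSpace.proj i : EuclideanSpace ℝ (Fin 3) →L[ℝ] ℝ)
      (EuclideanSpace.single i 1) = 1 := by simp
  rw [hxz, hproj]
  simp only [smul_eq_mul, starRingEnd_apply, star_trivial, one_mul, mul_one,
    Complex.real_smul, Complex.ofReal_one]
  push_cast
  ring

theorem sum_pd2_diag (k : ℝ) (z y : EuclideanSpace ℝ (Fin 3)) (h : y ≠ z) :
    ∑ i : Fin 3, pd i (pd i (fun y' => Phi k z y')) y = -(k:ℂ)^2 * Phi k z y := by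
  have hr := norm_ne z y h
  have hπ : (Real.pi : ℂ) ≠ 0 := by exact_mod_cast Real.pi_ne_zero
  have hr' : ((‖y - z‖ : ℝ) : ℂ) ≠ 0 := by exact_mod_cast hr
  have hsum : ∑ i : Fin 3, (y i - z i)^2 = ‖y - z‖^2 := by
    rw [EuclideanSpace.norm_eq, Real.sq_sqrt (by positivity)]
    refine Finset.sum_congr rfl fun i _ => ?_
    simp [PiLp.sub_apply, sq_abs]
  calc ∑ i : Fin 3, pd i (pd i (fun y' => Phi k z y')) y
      = ∑ i : Fin 3, (((y i - z i)^2 : ℝ) : ℂ) * (((‖y - z‖)⁻¹ : ℝ) : ℂ) * HH' k ‖y - z‖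
        + 3 * HH k ‖y - z‖ := by
        rw [Finset.sum_congr rfl (fun i _ => pd2_phi_diag k z y h i), Finset.sum_add_distrib]
        simp only [Finset.sum_const, Finset.card_fin, nsmul_eq_mul]
        push_cast
        congr 1
        · refine Finset.sum_congr rfl fun i _ => ?_
          ring
    _ = ((‖y - z‖ : ℝ) : ℂ) * HH' k ‖y - z‖ + 3 * HH k ‖y - z‖ := by
        congr 1
        rw [← Finset.sum_mul, ← Finset.sum_mul]
        have h2 : ∑ i : Fin 3, (((y i - z i)^2 : ℝ) : ℂ) = ((‖y - z‖^2 : ℝ) : ℂ) := by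
          norm_cast
        rw [h2, ← Complex.ofReal_mul]
        congr 2
        rw [sq, mul_assoc, mul_inv_cancel₀ hr, mul_one]
    _ = -(k:ℂ)^2 * Phi k z y := by
        rw [phi_eq]
        simp only [gg, ge, HH, HH']
        push_cast
        field_simp
        ring

theorem phi_im (k : ℝ) (z y : EuclideanSpace ℝ (Fin 3)) :
    (Phi k z y).im = Real.sin (k * ‖y - z‖) / (4 * Real.pi * ‖y - z‖) := by
  rw [Phi]
  have : Complex.I * (k:ℂ) * ((‖y - z‖ : ℝ) : ℂ) = ((k * ‖y - z‖ : ℝ) : ℂ) * Complex.I := by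
    push_cast; ring
  rw [this, Complex.div_ofReal_im, Complex.exp_ofReal_mul_I_im]

/-- Imaginary parts of the traces of the compressional and shear Green tensors:
`Im tr G_p(y,z) = sin(k_p|y−z|)/((λ+2μ)·4π|y−z|)` and
`Im tr G_s(y,z) = 2sin(k_s|y−z|)/(μ·4π|y−z|)`. -/
theorem im_trace_green_tensors
    (lam mu om : ℝ) (hmu : 0 < mu) (hlm : 0 < lam + 2 * mu) (hom : 0 < om)
    (kp ks : ℝ) (hkp : kp = om / Real.sqrt (lam + 2 * mu)) (hks : ks = om / Real.sqrt mu)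
    (y z : EuclideanSpace ℝ (Fin 3)) (hyz : y ≠ z)
    (Gp Gs : Matrix (Fin 3) (Fin 3) ℂ)
    (hGp : ∀ i j : Fin 3, Gp i j =
      -((1 / (mu * ks ^ 2) : ℝ) : ℂ) * pd2 i j (fun y' => Phi kp z y') y)
    (hGs : ∀ i j : Fin 3, Gs i j =
      ((1 / mu : ℝ) : ℂ) * (Phi ks z y * (if i = j then 1 else 0)
        + ((1 / ks ^ 2 : ℝ) : ℂ) * pd2 i j (fun y' => Phi ks z y') y)) :
    Gp.trace.im = (1 / (lam + 2 * mu)) * (Real.sin (kp * ‖y - z‖) / (4 * Real.pi * ‖y - z‖)) ∧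
    Gs.trace.im = (2 / mu) * (Real.sin (ks * ‖y - z‖) / (4 * Real.pi * ‖y - z‖)) := by
  have hks2 : ks ^ 2 = om ^ 2 / mu := by
    rw [hks, div_pow, Real.sq_sqrt hmu.le]
  have hkp2 : kp ^ 2 = om ^ 2 / (lam + 2 * mu) := by
    rw [hkp, div_pow, Real.sq_sqrt hlm.le]
  have hksne : ks ≠ 0 := by
    rw [hks]
    exact div_ne_zero hom.ne' (by positivity)
  have hksne' : ((ks : ℝ) : ℂ) ≠ 0 := by exact_mod_cast hksne
  constructor
  · have htr : Gp.trace = ((kp ^ 2 / (mu * ks ^ 2) : ℝ) : ℂ) * Phi kp z y := by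
      rw [Matrix.trace]
      simp only [Matrix.diag_apply, hGp, pd2]
      rw [← Finset.mul_sum, sum_pd2_diag kp z y hyz]
      push_cast
      ring
    rw [htr]
    have him := phi_im kp z y
    simp only [Complex.mul_im, Complex.ofReal_re, Complex.ofReal_im, zero_mul, add_zero, him]
    have hco : kp ^ 2 / (mu * ks ^ 2) = 1 / (lam + 2 * mu) := by
      rw [hkp2, hks2]
      field_simp
    rw [hco]
  · have htr : Gs.trace = ((2 / mu : ℝ) : ℂ) * Phi ks z y := by
      rw [Matrix.trace]
      simp only [Matrix.diag_apply, hGs, pd2, if_pos rfl, mul_one]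
      rw [← Finset.mul_sum, Finset.sum_add_distrib, Finset.sum_const, Finset.card_fin,
        ← Finset.mul_sum, sum_pd2_diag ks z y hyz]
      have h1 : ((1 / ks ^ 2 : ℝ) : ℂ) * (-(ks:ℂ)^2 * Phi ks z y) = -Phi ks z y := by
        push_cast
        field_simp
      rw [h1]
      push_cast
      ring
    rw [htr]
    have him := phi_im ks z y
    simp only [Complex.mul_im, Complex.ofReal_re, Complex.ofReal_im, zero_mul, add_zero, him]
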